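/- Let n₁ > n₂ ≥ 0 be integers of the same parity, let m ∈ ℤ, and set μ₁ = (n₁+n₂)/2 + m − 1, μ₂ = (n₁−n₂)/2 + m − 1, μ₃ = m − (n₁−n₂)/2, μ₄ = m − (n₁+n₂)/2, and ρ = (3,2,1,0). For a permutation w ∈ S₄, define D(w) = Σ_{i=2}^{4} (i−1)·((μ+ρ)_{w^{-1}(i)} − (μ+ρ)_i). Then the minimum of D(w) over all w ∈ S₄ with w ≠ 1 equals min{n₁ − n₂, n₂ + 1}. -/

import Mathlib

/-- For the weight `μ` of the Asai transfer (split case) and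
`ρ = (3,2,1,0)`, the minimum over `w ∈ S₄ \ {1}` of
`D(w) = Σᵢ (i−1)·((μ+ρ)_{w⁻¹(i)} − (μ+ρ)ᵢ)` equals `min{n₁ − n₂, n₂ + 1}`. -/
theorem asai_split_small_slope (n₁ n₂ m μ₁ μ₂ μ₃ μ₄ : ℤ)
    (hn : n₁ > n₂) (hn₂ : n₂ ≥ 0) (hpar : n₁ % 2 = n₂ % 2)
    (hμ₁ : 2 * μ₁ = (n₁ + n₂) + 2 * (m - 1))
    (hμ₂ : 2 * μ₂ = (n₁ - n₂) + 2 * (m - 1))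
    (hμ₃ : 2 * μ₃ = 2 * m - (n₁ - n₂))
    (hμ₄ : 2 * μ₄ = 2 * m - (n₁ + n₂)) :
    IsLeast
      {d : ℤ | ∃ w : Equiv.Perm (Fin 4), w ≠ 1 ∧
        d = ∑ i : Fin 4, (i : ℤ) *
          ((![μ₁, μ₂, μ₃, μ₄] (w⁻¹ i) + ![3, 2, 1, 0] (w⁻¹ i)) -
            (![μ₁, μ₂, μ₃, μ₄] i + ![3, 2, 1, 0] i))}
      (min (n₁ - n₂) (n₂ + 1)) := by
  constructor
  · -- membership
    rcases le_or_gt (n₁ - n₂) (n₂ + 1) with h | h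
    · refine ⟨Equiv.swap 1 2, by decide, ?_⟩
      simp [Fin.sum_univ_four, Equiv.swap_apply_def]
      omega
    · refine ⟨Equiv.swap 0 1, by decide, ?_⟩
      simp [Fin.sum_univ_four, Equiv.swap_apply_def]
      omega
  · rintro d ⟨w, hw, hd⟩
    have hc : ∀ x : Fin 4, x = 0 ∨ x = 1 ∨ x = 2 ∨ x = 3 := by decide
    have inj := (w⁻¹).injective
    rcases hc (w⁻¹ 1) with h1 | h1 | h1 | h1 <;>
      rcases hc (w⁻¹ 2) with h2 | h2 | h2 | h2 <;>
      rcases hc (w⁻¹ 3) with h3 | h3 | h3 | h3 <;>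
      first
      | exact absurd (inj (h1.trans h2.symm)) (by decide)
      | exact absurd (inj (h1.trans h3.symm)) (by decide)
      | exact absurd (inj (h2.trans h3.symm)) (by decide)
      | -- identity case
        (refine absurd (Equiv.ext fun x => ?_) hw
         have g1 : w 1 = 1 := by have : w (w⁻¹ 1) = 1 := w.apply_symm_apply 1; rwa [h1] at this
         have g2 : w 2 = 2 := by have : w (w⁻¹ 2) = 2 := w.apply_symm_apply 2; rwa [h2] at this
         have g3 : w 3 = 3 := by have : w (w⁻¹ 3) = 3 := w.apply_symm_apply 3; rwa [h3] at this
         have g0 : w 0 = 0 := by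
           rcases hc (w 0) with g | g | g | g
           · exact g
           · exact absurd (w.injective (g.trans g1.symm)) (by decide)
           · exact absurd (w.injective (g.trans g2.symm)) (by decide)
           · exact absurd (w.injective (g.trans g3.symm)) (by decide)
         rcases hc x with rfl | rfl | rfl | rfl
         exacts [g0, g1, g2, g3])
      | (simp only [Fin.sum_univ_four] at hd
         rw [h1, h2, h3] at hd
         simp at hd
         omega)
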